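/- (Negativity of det H beyond the epidemic threshold.) Let β, γ, μ > 0 and I ≥ 0 be real numbers, and for S ∈ ℝ let H(S) = !![-(β*I + μ), β*(I - S)/2; β*(I - S)/2, β*S - γ - μ] (the symmetric part of the SIR Jacobian at state (S, I)). Then: (i) the function S ↦ det H(S) has derivative −β·μ − β²·(S + I)/2, which is strictly negative for S, I ≥ 0, so det H is strictly decreasing in S on [0, ∞); (ii) at S = (γ+μ)/β (i.e. S = 1/R₀ where R₀ = β/(γ+μ)), det H = −((γ+μ)²/4)·(1 − I·R₀)² ≤ 0; and consequently (iii) det H(S) ≤ 0 for every S ≥ (γ+μ)/β, so the larger eigenvalue of H is nonnegative there and transient growth of fluctuations is possible. -/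
import Mathlib


open Matrix

/-- The symmetric part of the SIR Jacobian at state `(S, I)`. -/
noncomputable def Hsir (β γ μ I S : ℝ) : Matrix (Fin 2) (Fin 2) ℝ :=
  !![-(β * I + μ), β * (I - S) / 2; β * (I - S) / 2, β * S - γ - μ]

lemma Hsir_det (β γ μ I S : ℝ) :
    (Hsir β γ μ I S).det =
      (-(β * I + μ)) * (β * S - γ - μ) - (β * (I - S) / 2) * (β * (I - S) / 2) := by
  simp [Hsir, Matrix.det_fin_two_of]

lemma eig_of_det_nonpos (a b c : ℝ) (h : a * c - b * b ≤ 0) :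
    ∃ lam : ℝ, 0 ≤ lam ∧ ∃ v : Fin 2 → ℝ, v ≠ 0 ∧
      (!![a, b; b, c] : Matrix (Fin 2) (Fin 2) ℝ) *ᵥ v = lam • v := by
  set D : ℝ := (a - c) ^ 2 + 4 * b ^ 2 with hD
  have hD0 : 0 ≤ D := by positivity
  set lam : ℝ := ((a + c) + Real.sqrt D) / 2 with hlam
  have hsq : Real.sqrt D ^ 2 = D := Real.sq_sqrt hD0
  have hge : |a + c| ≤ Real.sqrt D := by
    rw [← Real.sqrt_sq_eq_abs]
    apply Real.sqrt_le_sqrt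
    nlinarith
  have hlamnn : 0 ≤ lam := by
    have := neg_abs_le (a + c)
    rw [hlam]; linarith
  have hquad : lam ^ 2 - (a + c) * lam + (a * c - b * b) = 0 := by
    have h2l : 2 * lam - (a + c) = Real.sqrt D := by rw [hlam]; ring
    have : (2 * lam - (a + c)) ^ 2 = D := by rw [h2l]; exact hsq
    nlinarith [this]
  refine ⟨lam, hlamnn, ?_⟩
  by_cases hb : b = 0
  · -- lam = max a c
    rcases le_total a c with hac | hac
    · refine ⟨![0, 1], ?_, ?_⟩
      · intro h'; have := congrFun h' 1; simp at this
      · have hlc : lam = c := by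
          have : Real.sqrt D = c - a := by
            rw [hD, hb]
            have : (a - c) ^ 2 + 4 * 0 ^ 2 = (c - a) ^ 2 := by ring
            rw [this, Real.sqrt_sq (by linarith)]
          rw [hlam, this]; ring
        funext i; fin_cases i <;>
          simp [Matrix.mulVec, dotProduct, Fin.sum_univ_two, hb, hlc]
    · refine ⟨![1, 0], ?_, ?_⟩
      · intro h'; have := congrFun h' 0; simp at this
      · have hla : lam = a := by
          have : Real.sqrt D = a - c := by
            rw [hD, hb]
            have : (a - c) ^ 2 + 4 * 0 ^ 2 = (a - c) ^ 2 := by ring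
            rw [this, Real.sqrt_sq (by linarith)]
          rw [hlam, this]; ring
        funext i; fin_cases i <;>
          simp [Matrix.mulVec, dotProduct, Fin.sum_univ_two, hb, hla]
  · refine ⟨![b, lam - a], ?_, ?_⟩
    · intro h'; have := congrFun h' 0; simp at this; exact hb this
    · funext i; fin_cases i <;>
        simp [Matrix.mulVec, dotProduct, Fin.sum_univ_two] <;> nlinarith [hquad]

theorem stmt_19 (β γ μ I : ℝ) (hβ : 0 < β) (hγ : 0 < γ) (hμ : 0 < μ) (hI : 0 ≤ I) :
    (∀ S : ℝ, HasDerivAt (fun S : ℝ => (Hsir β γ μ I S).det)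
        (-(β * μ) - β ^ 2 * (S + I) / 2) S) ∧
      (∀ S : ℝ, 0 ≤ S → -(β * μ) - β ^ 2 * (S + I) / 2 < 0) ∧
      StrictAntiOn (fun S : ℝ => (Hsir β γ μ I S).det) (Set.Ici 0) ∧
      (Hsir β γ μ I ((γ + μ) / β)).det =
        -((γ + μ) ^ 2 / 4) * (1 - I * (β / (γ + μ))) ^ 2 ∧
      (Hsir β γ μ I ((γ + μ) / β)).det ≤ 0 ∧
      (∀ S : ℝ, (γ + μ) / β ≤ S →
        (Hsir β γ μ I S).det ≤ 0 ∧
          ∃ lam : ℝ, 0 ≤ lam ∧ ∃ v : Fin 2 → ℝ, v ≠ 0 ∧ Hsir β γ μ I S *ᵥ v = lam • v) := by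
  have hβ' : (β : ℝ) ≠ 0 := ne_of_gt hβ
  have hγμ : (0:ℝ) < γ + μ := by linarith
  have hγμ' : (γ + μ : ℝ) ≠ 0 := ne_of_gt hγμ
  -- derivative
  have hderiv : ∀ S : ℝ, HasDerivAt (fun S : ℝ => (Hsir β γ μ I S).det)
      (-(β * μ) - β ^ 2 * (S + I) / 2) S := by
    intro S
    have h1 : HasDerivAt (fun S : ℝ =>
        (-(β ^ 2 / 4)) * S ^ 2 + (-(β * I + μ) * β + β ^ 2 * I / 2) * S
          + ((β * I + μ) * (γ + μ) - β ^ 2 * I ^ 2 / 4))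
        ((-(β ^ 2 / 4)) * (2 * S) + (-(β * I + μ) * β + β ^ 2 * I / 2)) S := by
      have hp : HasDerivAt (fun S : ℝ => S ^ 2) (2 * S) S := by
        simpa using hasDerivAt_pow 2 S
      exact (((hp.const_mul _).add ((hasDerivAt_id S).const_mul _)).add_const _).congr_deriv
        (by ring)
    have h2 : (fun S : ℝ => (Hsir β γ μ I S).det) = fun S : ℝ =>
        (-(β ^ 2 / 4)) * S ^ 2 + (-(β * I + μ) * β + β ^ 2 * I / 2) * S
          + ((β * I + μ) * (γ + μ) - β ^ 2 * I ^ 2 / 4) := by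
      funext S; rw [Hsir_det]; ring
    rw [h2]
    exact h1.congr_deriv (by ring)
  have hneg : ∀ S : ℝ, 0 ≤ S → -(β * μ) - β ^ 2 * (S + I) / 2 < 0 := by
    intro S hS; nlinarith
  have hanti : StrictAntiOn (fun S : ℝ => (Hsir β γ μ I S).det) (Set.Ici 0) := by
    apply StrictAntiOn.mono (s := Set.Ici (0:ℝ)) ?_ le_rfl
    exact strictAntiOn_of_deriv_neg (convex_Ici 0)
      (fun x _ => (hderiv x).differentiableAt.continuousAt.continuousWithinAt)
      (fun x hx => by
        rw [(hderiv x).deriv]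
        exact hneg x (le_of_lt (by simpa using hx)))
  have hval : (Hsir β γ μ I ((γ + μ) / β)).det =
      -((γ + μ) ^ 2 / 4) * (1 - I * (β / (γ + μ))) ^ 2 := by
    rw [Hsir_det]; field_simp; ring
  have hval0 : (Hsir β γ μ I ((γ + μ) / β)).det ≤ 0 := by
    rw [hval]
    have h1 : (0:ℝ) ≤ (γ + μ) ^ 2 / 4 := by positivity
    nlinarith [sq_nonneg (1 - I * (β / (γ + μ)))]
  refine ⟨hderiv, hneg, hanti, hval, hval0, ?_⟩
  intro S hS
  have hth : (0:ℝ) ≤ (γ + μ) / β := le_of_lt (by positivity)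
  have hdet : (Hsir β γ μ I S).det ≤ 0 := by
    have := hanti.antitoneOn (Set.mem_Ici.mpr hth) (Set.mem_Ici.mpr (le_trans hth hS)) hS
    exact le_trans this hval0
  refine ⟨hdet, ?_⟩
  have := eig_of_det_nonpos (-(β * I + μ)) (β * (I - S) / 2) (β * S - γ - μ)
    (by rw [← Hsir_det]; exact hdet)
  simpa [Hsir] using this
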